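/- arXiv:1806.05200 — 2 statements merged into one kernel-verified Lean document; each statement's English description precedes it below -/
import Mathlib

section
/- For n ≥ 3, the set G = { y_i y_j − xz : 1 ≤ i < j ≤ n } ∪ { xz(y_k − y_n) : 1 ≤ k ≤ n−1 } ∪ { xz(y_n² − xz) } is the reduced Gröbner basis of the join-meet ideal I of the diamond lattice D_{n+2} with respect to the reverse lexicographic order induced by x > y_1 > y_2 > ⋯ > y_n > z. -/
open MvPolynomial

noncomputable def xP (K : Type*) [Field K] (n : ℕ) : MvPolynomial (Fin (n + 2)) K := X 0
noncomputable def zP (K : Type*) [Field K] (n : ℕ) : MvPolynomial (Fin (n + 2)) K :=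
  X (Fin.last (n + 1))
noncomputable def yP (K : Type*) [Field K] (n : ℕ) (i : Fin n) : MvPolynomial (Fin (n + 2)) K :=
  X i.succ.castSucc
noncomputable def diamondIdeal (K : Type*) [Field K] (n : ℕ) :
    Ideal (MvPolynomial (Fin (n + 2)) K) :=
  Ideal.span {f | ∃ i j : Fin n, i < j ∧ f = yP K n i * yP K n j - xP K n * zP K n}
def mdeg {σ : Type*} (m : σ →₀ ℕ) : ℕ := m.sum fun _ e => e
def revlexLt {N : ℕ} (a b : Fin N →₀ ℕ) : Prop :=
  mdeg a < mdeg b ∨ (mdeg a = mdeg b ∧ ∃ i, b i < a i ∧ ∀ j, i < j → a j = b j)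
def IsLeadMon {N : ℕ} {K : Type*} [Field K] (f : MvPolynomial (Fin N) K) (m : Fin N →₀ ℕ) :
    Prop :=
  m ∈ f.support ∧ ∀ m' ∈ f.support, m' ≠ m → revlexLt m' m
noncomputable def initialIdeal {N : ℕ} (K : Type*) [Field K]
    (I : Ideal (MvPolynomial (Fin N) K)) : Ideal (MvPolynomial (Fin N) K) :=
  Ideal.span {p | ∃ f ∈ I, ∃ m, IsLeadMon f m ∧ p = monomial m (1 : K)}
def IsGroebnerBasis {N : ℕ} {K : Type*} [Field K] (G : Set (MvPolynomial (Fin N) K))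
    (I : Ideal (MvPolynomial (Fin N) K)) : Prop :=
  G ⊆ (I : Set (MvPolynomial (Fin N) K)) ∧
    initialIdeal K I = Ideal.span {p | ∃ g ∈ G, ∃ m, IsLeadMon g m ∧ p = monomial m (1 : K)}
def IsReducedGroebnerBasis {N : ℕ} {K : Type*} [Field K] (G : Set (MvPolynomial (Fin N) K))
    (I : Ideal (MvPolynomial (Fin N) K)) : Prop :=
  IsGroebnerBasis G I ∧
    (∀ g ∈ G, ∃ m, IsLeadMon g m ∧ coeff m g = 1) ∧
    (∀ g ∈ G, ∀ g' ∈ G, g ≠ g' → ∀ m', IsLeadMon g' m' → ∀ m ∈ g.support, ¬ m' ≤ m)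


namespace DGB
variable {n : ℕ}

def iy (i : Fin n) : Fin (n + 2) := i.succ.castSucc

@[simp] lemma iy_val (i : Fin n) : (iy i).val = i.val + 1 := by
  simp [iy]

lemma iy_ne_zero (i : Fin n) : iy i ≠ 0 := by
  intro h
  have := congrArg Fin.val h
  simp at this

lemma iy_ne_last (i : Fin n) : iy i ≠ Fin.last (n + 1) := by
  intro h
  have := congrArg Fin.val h
  simp [Fin.last] at this
  omega

lemma zero_ne_last : (0 : Fin (n + 2)) ≠ Fin.last (n + 1) := by
  intro h
  have := congrArg Fin.val h
  simp [Fin.last] at this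

lemma iy_inj {i j : Fin n} (h : iy i = iy j) : i = j := by
  have := congrArg Fin.val h
  simp at this
  exact Fin.ext this

lemma index_cases (t : Fin (n + 2)) :
    t = 0 ∨ t = Fin.last (n + 1) ∨ ∃ i : Fin n, t = iy i := by
  rcases Nat.eq_zero_or_pos t.val with h | h
  · exact Or.inl (Fin.ext h)
  · by_cases h2 : t.val = n + 1
    · exact Or.inr (Or.inl (Fin.ext (by simpa [Fin.last] using h2)))
    · refine Or.inr (Or.inr ⟨⟨t.val - 1, by omega⟩, Fin.ext ?_⟩)
      simp
      omega

-- exponent vectors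
noncomputable def exz : Fin (n + 2) →₀ ℕ := Finsupp.single 0 1 + Finsupp.single (Fin.last (n + 1)) 1
noncomputable def eL1 (i j : Fin n) : Fin (n + 2) →₀ ℕ := Finsupp.single (iy i) 1 + Finsupp.single (iy j) 1
noncomputable def eL2 (k : Fin n) : Fin (n + 2) →₀ ℕ := exz + Finsupp.single (iy k) 1
noncomputable def eL3 (m : Fin n) : Fin (n + 2) →₀ ℕ := exz + Finsupp.single (iy m) 2

@[simp] lemma exz_zero : (exz : Fin (n + 2) →₀ ℕ) 0 = 1 := by
  simp [exz, Finsupp.single_apply, zero_ne_last.symm]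
@[simp] lemma exz_last : (exz : Fin (n + 2) →₀ ℕ) (Fin.last (n + 1)) = 1 := by
  simp [exz, Finsupp.single_apply, zero_ne_last]
@[simp] lemma exz_iy (t : Fin n) : (exz : Fin (n + 2) →₀ ℕ) (iy t) = 0 := by
  simp [exz, Finsupp.single_apply, (iy_ne_zero t).symm, (iy_ne_last t).symm]

@[simp] lemma single_iy_zero (s : Fin n) (e : ℕ) :
    (Finsupp.single (iy s) e : Fin (n + 2) →₀ ℕ) 0 = 0 := by
  simp [Finsupp.single_apply, (iy_ne_zero s)]
@[simp] lemma single_iy_last (s : Fin n) (e : ℕ) :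
    (Finsupp.single (iy s) e : Fin (n + 2) →₀ ℕ) (Fin.last (n + 1)) = 0 := by
  simp [Finsupp.single_apply, (iy_ne_last s)]
lemma single_iy_iy (s t : Fin n) (e : ℕ) :
    (Finsupp.single (iy s) e : Fin (n + 2) →₀ ℕ) (iy t) = if s = t then e else 0 := by
  rw [Finsupp.single_apply]
  by_cases h : s = t
  · simp [h]
  · rw [if_neg (fun hh => h (iy_inj hh)), if_neg h]

def ydeg (m : Fin (n + 2) →₀ ℕ) : ℕ := ∑ i : Fin n, m (iy i)

lemma ydeg_add (a b : Fin (n + 2) →₀ ℕ) : ydeg (a + b) = ydeg a + ydeg b := by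
  simp [ydeg, Finset.sum_add_distrib]

@[simp] lemma ydeg_single_iy (s : Fin n) (e : ℕ) :
    ydeg (Finsupp.single (iy s) e : Fin (n + 2) →₀ ℕ) = e := by
  rw [ydeg]
  rw [Finset.sum_eq_single s]
  · rw [single_iy_iy, if_pos rfl]
  · intro t _ ht
    rw [single_iy_iy, if_neg (Ne.symm ht)]
  · intro h; exact absurd (Finset.mem_univ s) h

@[simp] lemma ydeg_exz : ydeg (exz : Fin (n + 2) →₀ ℕ) = 0 := by
  simp [ydeg]

lemma mdeg_eq_sum (m : Fin (n + 2) →₀ ℕ) : mdeg m = ∑ t : Fin (n + 2), m t := by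
  rw [mdeg, Finsupp.sum_fintype]
  intro _; rfl

lemma mdeg_eq (m : Fin (n + 2) →₀ ℕ) : mdeg m = m 0 + ydeg m + m (Fin.last (n + 1)) := by
  rw [mdeg_eq_sum, Fin.sum_univ_castSucc, Fin.sum_univ_succ, ydeg]
  have h0 : (Fin.castSucc (0 : Fin (n + 1))) = (0 : Fin (n + 2)) := rfl
  have hl : (Fin.last (n + 1)) = Fin.last (n + 1) := rfl
  rw [h0]
  have : ∀ i : Fin n, Fin.castSucc i.succ = iy i := fun i => rfl
  simp only [this]


lemma mdeg_single {σ : Type*} (t : σ) (e : ℕ) : mdeg (Finsupp.single t e) = e := by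
  rw [mdeg, Finsupp.sum_single_index rfl]

lemma mdeg_add {σ : Type*} (a b : σ →₀ ℕ) : mdeg (a + b) = mdeg a + mdeg b := by
  rw [mdeg, Finsupp.sum_add_index'] <;> simp [mdeg]

lemma revlex_irrefl {N : ℕ} (a : Fin N →₀ ℕ) : ¬ revlexLt a a := by
  rintro (h | ⟨-, i, h, -⟩)
  · exact lt_irrefl _ h
  · exact lt_irrefl _ h

lemma revlex_trans {N : ℕ} {a b c : Fin N →₀ ℕ}
    (h1 : revlexLt a b) (h2 : revlexLt b c) : revlexLt a c := by
  rcases h1 with h1 | ⟨hd1, i1, hi1, he1⟩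
  · rcases h2 with h2 | ⟨hd2, _⟩
    · exact Or.inl (h1.trans h2)
    · exact Or.inl (hd2 ▸ h1)
  · rcases h2 with h2 | ⟨hd2, i2, hi2, he2⟩
    · exact Or.inl (hd1 ▸ h2)
    · refine Or.inr ⟨hd1.trans hd2, ?_⟩
      rcases lt_trichotomy i1 i2 with h | h | h
      · exact ⟨i2, by rw [he1 i2 h]; exact hi2, fun j hj => (he1 j (h.trans hj)).trans (he2 j hj)⟩
      · subst h
        exact ⟨i1, hi2.trans hi1, fun j hj => (he1 j hj).trans (he2 j hj)⟩
      · exact ⟨i1, by rw [← he2 i1 h]; exact hi1, fun j hj => (he1 j hj).trans (he2 j (h.trans hj))⟩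

lemma revlex_asymm {N : ℕ} {a b : Fin N →₀ ℕ} (h1 : revlexLt a b) : ¬ revlexLt b a :=
  fun h2 => revlex_irrefl a (revlex_trans h1 h2)

lemma not_last_lt (j : Fin (n + 2)) : ¬ Fin.last (n + 1) < j := by
  simp [Fin.lt_def, Fin.last]
  omega



-- more single-eval simp lemmas
@[simp] lemma single_zero_iy (e : ℕ) (t : Fin n) :
    (Finsupp.single (0 : Fin (n + 2)) e) (iy t) = 0 := by
  simp [Finsupp.single_apply, (iy_ne_zero t).symm]
@[simp] lemma single_zero_last (e : ℕ) :
    (Finsupp.single (0 : Fin (n + 2)) e) (Fin.last (n + 1)) = 0 := by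
  simp [Finsupp.single_apply, zero_ne_last]
@[simp] lemma single_last_iy (e : ℕ) (t : Fin n) :
    (Finsupp.single (Fin.last (n + 1)) e : Fin (n + 2) →₀ ℕ) (iy t) = 0 := by
  simp [Finsupp.single_apply, (iy_ne_last t).symm]
@[simp] lemma single_last_zero (e : ℕ) :
    (Finsupp.single (Fin.last (n + 1)) e : Fin (n + 2) →₀ ℕ) 0 = 0 := by
  simp [Finsupp.single_apply, zero_ne_last.symm]
@[simp] lemma ydeg_single_zero (e : ℕ) :
    ydeg (Finsupp.single (0 : Fin (n + 2)) e) = 0 := by simp [ydeg]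
@[simp] lemma ydeg_single_last (e : ℕ) :
    ydeg (Finsupp.single (Fin.last (n + 1)) e : Fin (n + 2) →₀ ℕ) = 0 := by simp [ydeg]

def ym (n : ℕ) (hn : 3 ≤ n) : Fin n := ⟨n - 1, Nat.sub_lt (by omega) Nat.one_pos⟩

variable (hn : 3 ≤ n)

@[simp] lemma ym_val : (ym n hn).val = n - 1 := rfl

lemma ne_ym_iff (t : Fin n) : t ≠ ym n hn ↔ t.val < n - 1 := by
  rw [← Fin.val_ne_iff]
  have := t.isLt
  constructor <;> intro h <;> simp_all <;> omega

def Nonstd (m : Fin (n + 2) →₀ ℕ) : Prop :=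
  (∃ i j : Fin n, i < j ∧ 1 ≤ m (iy i) ∧ 1 ≤ m (iy j)) ∨
  (1 ≤ m 0 ∧ 1 ≤ m (Fin.last (n + 1)) ∧ ∃ k : Fin n, k.val < n - 1 ∧ 1 ≤ m (iy k)) ∨
  (1 ≤ m 0 ∧ 1 ≤ m (Fin.last (n + 1)) ∧ 2 ≤ m (iy (ym n hn)))

noncomputable def NFm (m : Fin (n + 2) →₀ ℕ) : Fin (n + 2) →₀ ℕ :=
  Finsupp.single 0 (m 0 + ydeg m / 2) +
    Finsupp.single (Fin.last (n + 1)) (m (Fin.last (n + 1)) + ydeg m / 2) +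
    Finsupp.single (iy (ym n hn)) (ydeg m % 2)

open Classical in
noncomputable def numon (m : Fin (n + 2) →₀ ℕ) : Fin (n + 2) →₀ ℕ :=
  if Nonstd hn m then NFm hn m else m

@[simp] lemma NFm_zero (m : Fin (n + 2) →₀ ℕ) : NFm hn m 0 = m 0 + ydeg m / 2 := by
  rw [NFm, Finsupp.add_apply, Finsupp.add_apply, Finsupp.single_eq_same, single_last_zero,
    single_iy_zero]
  omega
@[simp] lemma NFm_last (m : Fin (n + 2) →₀ ℕ) :
    NFm hn m (Fin.last (n + 1)) = m (Fin.last (n + 1)) + ydeg m / 2 := by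
  rw [NFm, Finsupp.add_apply, Finsupp.add_apply, Finsupp.single_eq_same, single_zero_last,
    single_iy_last]
  omega
lemma NFm_iy (m : Fin (n + 2) →₀ ℕ) (t : Fin n) :
    NFm hn m (iy t) = if ym n hn = t then ydeg m % 2 else 0 := by
  rw [NFm, Finsupp.add_apply, Finsupp.add_apply, single_zero_iy, single_last_iy, single_iy_iy]
  simp

lemma pair_le_ydeg {i j : Fin n} (hij : i ≠ j) (m : Fin (n + 2) →₀ ℕ) :
    m (iy i) + m (iy j) ≤ ydeg m := by
  rw [ydeg]
  calc m (iy i) + m (iy j) = ∑ t ∈ ({i, j} : Finset (Fin n)), m (iy t) :=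
        (Finset.sum_pair (f := fun t => m (iy t)) hij).symm
    _ ≤ ∑ t : Fin n, m (iy t) := Finset.sum_le_sum_of_subset (Finset.subset_univ _)

lemma single_le_ydeg (t : Fin n) (m : Fin (n + 2) →₀ ℕ) : m (iy t) ≤ ydeg m :=
  Finset.single_le_sum (f := fun s => m (iy s)) (fun _ _ => Nat.zero_le _) (Finset.mem_univ t)

lemma mdeg_NFm (m : Fin (n + 2) →₀ ℕ) : mdeg (NFm hn m) = mdeg m := by
  have hy : ydeg (NFm hn m) = ydeg m % 2 := by
    rw [NFm, ydeg_add, ydeg_add, ydeg_single_zero, ydeg_single_last, ydeg_single_iy]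
    omega
  rw [mdeg_eq (NFm hn m), NFm_zero, NFm_last, hy, mdeg_eq m]
  omega

lemma ydeg_eq_single (u : Fin (n + 2) →₀ ℕ)
    (h : ∀ t : Fin n, t ≠ ym n hn → u (iy t) = 0) : ydeg u = u (iy (ym n hn)) := by
  rw [ydeg, Finset.sum_eq_single (ym n hn)]
  · intro t _ ht; exact h t ht
  · intro hmem; exact absurd (Finset.mem_univ _) hmem

lemma revlex_NFm {m : Fin (n + 2) →₀ ℕ} (h : Nonstd hn m) : revlexLt (NFm hn m) m := by
  refine Or.inr ⟨mdeg_NFm hn m, ?_⟩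
  by_cases hc : 2 ≤ ydeg m
  · refine ⟨Fin.last (n + 1), ?_, fun j hj => absurd hj (not_last_lt j)⟩
    rw [NFm_last]
    omega
  · -- ydeg m ≤ 1; m is Nonstd so we must be in the second case with ydeg m = 1
    have hcases := h
    rcases hcases with ⟨i, j, hij, hi, hj⟩ | ⟨h0, hl, k, hk, hk1⟩ | ⟨h0, hl, h2⟩
    · exfalso
      have := pair_le_ydeg (Fin.ne_of_lt hij) m
      omega
    · -- set up: ydeg m = 1 concentrated at k, k ≠ ym
      have hkym : k ≠ ym n hn := (ne_ym_iff hn k).2 hk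
      have hmym : m (iy (ym n hn)) = 0 := by
        have := pair_le_ydeg hkym m
        omega
      refine ⟨iy (ym n hn), ?_, fun j hj => ?_⟩
      · rw [NFm_iy, if_pos rfl, hmym]
        have := single_le_ydeg k m
        omega
      · -- j > iy ym means j = last
        have hjval : j = Fin.last (n + 1) := by
          have h1 : (iy (ym n hn)).val < j.val := hj
          have h2 : j.val < n + 2 := j.isLt
          apply Fin.ext
          simp [Fin.last]
          simp at h1
          omega
        subst hjval
        rw [NFm_last]
        omega
    · exfalso
      have := single_le_ydeg (ym n hn) m
      omega

lemma ydeg_eL1 (i j : Fin n) : ydeg (eL1 i j : Fin (n + 2) →₀ ℕ) = 2 := by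
  simp [eL1, ydeg_add]

lemma key_identity (u : Fin (n + 2) →₀ ℕ) {i j : Fin n} (hij : i < j) :
    numon hn (u + eL1 i j) = numon hn (u + exz) := by
  have hij' : i ≠ j := Fin.ne_of_lt hij
  set c := ydeg u with hc
  have hy1 : ydeg (u + eL1 i j) = c + 2 := by rw [ydeg_add, ydeg_eL1]
  have hns1 : Nonstd hn (u + eL1 i j) := by
    refine Or.inl ⟨i, j, hij, ?_, ?_⟩ <;>
      simp [eL1, Finsupp.add_apply, single_iy_iy, hij', hij'.symm]
  have h10 : (u + eL1 i j) 0 = u 0 := by simp [eL1, Finsupp.add_apply]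
  have h1l : (u + eL1 i j) (Fin.last (n + 1)) = u (Fin.last (n + 1)) := by
    simp [eL1, Finsupp.add_apply]
  have h20 : (u + exz : Fin (n + 2) →₀ ℕ) 0 = u 0 + 1 := by
    rw [Finsupp.add_apply, exz_zero]
  have h2l : (u + exz : Fin (n + 2) →₀ ℕ) (Fin.last (n + 1)) = u (Fin.last (n + 1)) + 1 := by
    rw [Finsupp.add_apply, exz_last]
  have hy2 : ydeg (u + exz : Fin (n + 2) →₀ ℕ) = c := by
    rw [ydeg_add, ydeg_exz]
    omega
  rw [numon, if_pos hns1]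
  by_cases hns2 : Nonstd hn (u + exz)
  · rw [numon, if_pos hns2]
    rw [NFm, NFm, h10, h1l, h20, h2l, hy1, hy2]
    have e1 : u 0 + (c + 2) / 2 = u 0 + 1 + c / 2 := by omega
    have e2 : u (Fin.last (n + 1)) + (c + 2) / 2 = u (Fin.last (n + 1)) + 1 + c / 2 := by omega
    have e3 : (c + 2) % 2 = c % 2 := by omega
    rw [e1, e2, e3]
  · rw [numon, if_neg hns2]
    -- structure of u from ¬Nonstd (u + exz)
    rw [Nonstd] at hns2
    push_neg at hns2
    have huy : ∀ t : Fin n, t ≠ ym n hn → u (iy t) = 0 := by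
      intro t ht
      rcases hns2 with ⟨-, h2, -⟩
      have := h2 (by omega) (by omega) t ((ne_ym_iff hn t).1 ht)
      simp [Finsupp.add_apply] at this
      omega
    have hym1 : u (iy (ym n hn)) ≤ 1 := by
      rcases hns2 with ⟨-, -, h3⟩
      have := h3 (by omega) (by omega)
      simp [Finsupp.add_apply] at this
      omega
    have hcy : c = u (iy (ym n hn)) := by rw [hc]; exact ydeg_eq_single hn u huy
    have hdiv : (c + 2) / 2 = 1 := by omega
    have hmod : (c + 2) % 2 = c := by omega
    rw [NFm, h10, h1l, hy1, hdiv, hmod]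
    ext t
    rcases index_cases t with rfl | rfl | ⟨s, rfl⟩
    · rw [Finsupp.add_apply, Finsupp.add_apply, Finsupp.add_apply, Finsupp.single_eq_same,
        single_last_zero, single_iy_zero, exz_zero]
    · rw [Finsupp.add_apply, Finsupp.add_apply, Finsupp.add_apply, Finsupp.single_eq_same,
        single_zero_last, single_iy_last, exz_last]
      omega
    · rw [Finsupp.add_apply, Finsupp.add_apply, Finsupp.add_apply]
      rw [single_zero_iy, single_last_iy, single_iy_iy, exz_iy]
      by_cases hs : s = ym n hn
      · subst hs
        rw [if_pos rfl, hcy]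
        omega
      · rw [if_neg (Ne.symm hs), huy s hs]


variable {K : Type*} [Field K]

lemma gen_eq (i j : Fin n) :
    yP K n i * yP K n j - xP K n * zP K n
      = monomial (eL1 i j) (1 : K) - monomial exz (1 : K) := by
  rw [yP, yP, xP, zP, X, X, X, X, monomial_mul, monomial_mul, mul_one, eL1, exz]
  rfl

noncomputable def nu (hn : 3 ≤ n) (f : MvPolynomial (Fin (n + 2)) K) :
    MvPolynomial (Fin (n + 2)) K :=
  AddMonoidAlgebra.mapDomain (numon hn) f

lemma nu_monomial (u : Fin (n + 2) →₀ ℕ) (c : K) :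
    nu hn (monomial u c) = monomial (numon hn u) c := by
  rw [nu, ← single_eq_monomial, ← single_eq_monomial]
  exact AddMonoidAlgebra.mapDomain_single

lemma nu_add (p q : MvPolynomial (Fin (n + 2)) K) :
    nu hn (p + q) = nu hn p + nu hn q := AddMonoidAlgebra.mapDomain_add _ p q

lemma nu_sub (p q : MvPolynomial (Fin (n + 2)) K) :
    nu hn (p - q) = nu hn p - nu hn q :=
  by have := nu_add hn (p - q) q; rw [sub_add_cancel] at this; rw [this, add_sub_cancel_right]

lemma nu_zero : nu hn (0 : MvPolynomial (Fin (n + 2)) K) = 0 := AddMonoidAlgebra.mapDomain_zero _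

lemma nu_mul_gen (q : MvPolynomial (Fin (n + 2)) K) {i j : Fin n} (hij : i < j) :
    nu hn (q * (monomial (eL1 i j) (1 : K) - monomial exz (1 : K))) = 0 := by
  induction q using MvPolynomial.induction_on' with
  | monomial u c =>
    rw [mul_sub, monomial_mul, monomial_mul, mul_one, nu_sub, nu_monomial, nu_monomial,
      key_identity hn u hij, sub_self]
  | add p q hp hq =>
    rw [add_mul, nu_add, hp, hq, add_zero]

lemma nu_eq_zero_of_mem {f : MvPolynomial (Fin (n + 2)) K} (hf : f ∈ diamondIdeal K n) :
    nu hn f = 0 := by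
  have H : ∀ r, nu hn (r * f) = 0 := by
    refine Submodule.span_induction ?_ ?_ ?_ ?_ hf
    · rintro g ⟨i, j, hij, rfl⟩ r
      rw [gen_eq]
      exact nu_mul_gen hn r hij
    · intro r
      rw [mul_zero, nu_zero]
    · intro a b _ _ ha hb r
      rw [mul_add, nu_add, ha, hb, add_zero]
    · intro a x _ hx r
      rw [smul_eq_mul, ← mul_assoc]
      exact hx (r * a)
  have := H 1
  rwa [one_mul] at this

lemma mapDomain_apply_gen (g : (Fin (n + 2) →₀ ℕ) → (Fin (n + 2) →₀ ℕ))
    (f : MvPolynomial (Fin (n + 2)) K) (m : Fin (n + 2) →₀ ℕ) :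
    Finsupp.mapDomain g (AddMonoidAlgebra.coeff f) m = (AddMonoidAlgebra.coeff f).sum fun u c => if g u = m then c else 0 := by
  rw [Finsupp.mapDomain, Finsupp.sum_apply]
  congr 1
  ext u c
  rw [Finsupp.single_apply]

lemma lead_nonstd {f : MvPolynomial (Fin (n + 2)) K} (hf : f ∈ diamondIdeal K n)
    {L : Fin (n + 2) →₀ ℕ} (hL : IsLeadMon f L) : Nonstd hn L := by
  by_contra hstd
  have h0 := nu_eq_zero_of_mem hn hf
  have hcoeff : coeff L (nu hn f) = coeff L f := by
    have e1 : coeff L (nu hn f) = Finsupp.mapDomain (numon hn) (AddMonoidAlgebra.coeff f) L := rfl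
    rw [e1, mapDomain_apply_gen, Finsupp.sum, Finset.sum_eq_single L]
    · rw [numon, if_neg hstd, if_pos rfl]
      rfl
    · intro u hu hne
      have hlt : revlexLt u L := hL.2 u hu hne
      rw [if_neg]
      intro heq
      by_cases hns : Nonstd hn u
      · rw [numon, if_pos hns] at heq
        exact revlex_irrefl L (revlex_trans (heq ▸ revlex_NFm hn hns) hlt)
      · rw [numon, if_neg hns] at heq
        exact hne heq
    · intro hLs
      exact absurd hL.1 hLs
  rw [h0, coeff_zero] at hcoeff
  exact (MvPolynomial.mem_support_iff.1 hL.1) hcoeff.symm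


-- evaluations of the lead exponent vectors
@[simp] lemma eL1_zero (i j : Fin n) : (eL1 i j : Fin (n + 2) →₀ ℕ) 0 = 0 := by
  rw [eL1, Finsupp.add_apply, single_iy_zero, single_iy_zero]
@[simp] lemma eL1_last (i j : Fin n) : (eL1 i j : Fin (n + 2) →₀ ℕ) (Fin.last (n + 1)) = 0 := by
  rw [eL1, Finsupp.add_apply, single_iy_last, single_iy_last]
lemma eL1_iy (i j t : Fin n) :
    (eL1 i j : Fin (n + 2) →₀ ℕ) (iy t) = (if i = t then 1 else 0) + (if j = t then 1 else 0) := by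
  rw [eL1, Finsupp.add_apply, single_iy_iy, single_iy_iy]
@[simp] lemma eL2_zero (k : Fin n) : (eL2 k : Fin (n + 2) →₀ ℕ) 0 = 1 := by
  rw [eL2, Finsupp.add_apply, exz_zero, single_iy_zero]
@[simp] lemma eL2_last (k : Fin n) : (eL2 k : Fin (n + 2) →₀ ℕ) (Fin.last (n + 1)) = 1 := by
  rw [eL2, Finsupp.add_apply, exz_last, single_iy_last]
lemma eL2_iy (k t : Fin n) :
    (eL2 k : Fin (n + 2) →₀ ℕ) (iy t) = if k = t then 1 else 0 := by
  rw [eL2, Finsupp.add_apply, exz_iy, single_iy_iy, Nat.zero_add]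
@[simp] lemma eL3_zero (k : Fin n) : (eL3 k : Fin (n + 2) →₀ ℕ) 0 = 1 := by
  rw [eL3, Finsupp.add_apply, exz_zero, single_iy_zero]
@[simp] lemma eL3_last (k : Fin n) : (eL3 k : Fin (n + 2) →₀ ℕ) (Fin.last (n + 1)) = 1 := by
  rw [eL3, Finsupp.add_apply, exz_last, single_iy_last]
lemma eL3_iy (k t : Fin n) :
    (eL3 k : Fin (n + 2) →₀ ℕ) (iy t) = if k = t then 2 else 0 := by
  rw [eL3, Finsupp.add_apply, exz_iy, single_iy_iy, Nat.zero_add]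
@[simp] lemma exz2_zero : (exz + exz : Fin (n + 2) →₀ ℕ) 0 = 2 := by
  rw [Finsupp.add_apply, exz_zero]
@[simp] lemma exz2_last : (exz + exz : Fin (n + 2) →₀ ℕ) (Fin.last (n + 1)) = 2 := by
  rw [Finsupp.add_apply, exz_last]
@[simp] lemma exz2_iy (t : Fin n) : (exz + exz : Fin (n + 2) →₀ ℕ) (iy t) = 0 := by
  rw [Finsupp.add_apply, exz_iy]

-- mdeg values
lemma mdeg_exz : mdeg (exz : Fin (n + 2) →₀ ℕ) = 2 := by
  rw [exz, mdeg_add, mdeg_single, mdeg_single]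
lemma mdeg_eL1 (i j : Fin n) : mdeg (eL1 i j : Fin (n + 2) →₀ ℕ) = 2 := by
  rw [eL1, mdeg_add, mdeg_single, mdeg_single]
lemma mdeg_eL2 (k : Fin n) : mdeg (eL2 k : Fin (n + 2) →₀ ℕ) = 3 := by
  rw [eL2, mdeg_add, mdeg_exz, mdeg_single]
lemma mdeg_eL3 (k : Fin n) : mdeg (eL3 k : Fin (n + 2) →₀ ℕ) = 4 := by
  rw [eL3, mdeg_add, mdeg_exz, mdeg_single]
lemma mdeg_exz2 : mdeg (exz + exz : Fin (n + 2) →₀ ℕ) = 4 := by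
  rw [mdeg_add, mdeg_exz]

lemma gt_iy_ym {j : Fin (n + 2)} (hj : iy (ym n hn) < j) : j = Fin.last (n + 1) := by
  have h1 : (ym n hn).val + 1 < j.val := by
    have := (Fin.lt_def).1 hj
    rw [iy_val] at this
    omega
  have h3 : (ym n hn).val = n - 1 := rfl
  have h2 : j.val < n + 2 := j.isLt
  apply Fin.ext
  rw [Fin.val_last]
  omega

-- revlex comparisons for the three pairs
lemma revlex1 (i j : Fin n) : revlexLt exz (eL1 i j) := by
  refine Or.inr ⟨by rw [mdeg_exz, mdeg_eL1], Fin.last (n + 1), ?_, fun t ht => absurd ht (not_last_lt t)⟩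
  rw [eL1_last, exz_last]
  omega

lemma revlex2 {k : Fin n} (hk : k ≠ ym n hn) : revlexLt (eL2 (ym n hn)) (eL2 k) := by
  refine Or.inr ⟨by rw [mdeg_eL2, mdeg_eL2], iy (ym n hn), ?_, fun t ht => ?_⟩
  · rw [eL2_iy, eL2_iy, if_pos rfl, if_neg hk]
    omega
  · rw [gt_iy_ym hn ht, eL2_last, eL2_last]

lemma revlex3 : revlexLt (exz + exz : Fin (n + 2) →₀ ℕ) (eL3 (ym n hn)) := by
  refine Or.inr ⟨by rw [mdeg_exz2, mdeg_eL3], Fin.last (n + 1), ?_, fun t ht => absurd ht (not_last_lt t)⟩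
  rw [eL3_last, exz2_last]
  omega

lemma ne_of_apply_ne {a b : Fin (n + 2) →₀ ℕ} (t : Fin (n + 2)) (h : a t ≠ b t) : a ≠ b :=
  fun he => h (he ▸ rfl)

lemma ne1 (i j : Fin n) : (eL1 i j : Fin (n + 2) →₀ ℕ) ≠ exz :=
  ne_of_apply_ne 0 (by rw [eL1_zero, exz_zero]; omega)
lemma ne2 {k : Fin n} (hk : k ≠ ym n hn) : (eL2 k : Fin (n + 2) →₀ ℕ) ≠ eL2 (ym n hn) :=
  ne_of_apply_ne (iy k) (by rw [eL2_iy, eL2_iy, if_pos rfl, if_neg (fun h => hk h.symm)]; omega)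
lemma ne3 : (eL3 (ym n hn) : Fin (n + 2) →₀ ℕ) ≠ exz + exz :=
  ne_of_apply_ne (iy (ym n hn)) (by rw [eL3_iy, exz2_iy, if_pos rfl]; omega)

-- pair polynomial lemmas
lemma coeff_pair {A B : Fin (n + 2) →₀ ℕ} (hAB : A ≠ B) (m : Fin (n + 2) →₀ ℕ) :
    coeff m (monomial A (1 : K) - monomial B (1 : K)) =
      if m = A then 1 else if m = B then -1 else 0 := by
  rw [coeff_sub, coeff_monomial, coeff_monomial]
  by_cases h1 : m = A
  · subst h1
    rw [if_pos rfl, if_pos rfl, if_neg (fun h => hAB h.symm)]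
    ring
  · rw [if_neg h1, if_neg (fun h => h1 h.symm)]
    by_cases h2 : m = B
    · subst h2
      rw [if_pos rfl, if_pos rfl]
      ring
    · rw [if_neg h2, if_neg (fun h => h2 h.symm)]
      ring

lemma mem_support_pair {A B : Fin (n + 2) →₀ ℕ} (hAB : A ≠ B) (m : Fin (n + 2) →₀ ℕ) :
    m ∈ (monomial A (1 : K) - monomial B (1 : K)).support ↔ m = A ∨ m = B := by
  rw [MvPolynomial.mem_support_iff, coeff_pair hAB]
  constructor
  · intro h
    by_cases h1 : m = A
    · exact Or.inl h1
    · by_cases h2 : m = B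
      · exact Or.inr h2
      · rw [if_neg h1, if_neg h2] at h
        exact absurd rfl h
  · rintro (rfl | rfl)
    · rw [if_pos rfl]
      exact one_ne_zero
    · rw [if_neg hAB.symm, if_pos rfl]
      exact neg_ne_zero.2 one_ne_zero

lemma isLead_pair {A B : Fin (n + 2) →₀ ℕ} (hAB : A ≠ B) (hBA : revlexLt B A) :
    IsLeadMon (monomial A (1 : K) - monomial B (1 : K)) A := by
  refine ⟨(mem_support_pair hAB A).2 (Or.inl rfl), fun m' hm' hne => ?_⟩
  rcases (mem_support_pair hAB m').1 hm' with rfl | rfl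
  · exact absurd rfl hne
  · exact hBA

lemma lead_unique_pair {A B : Fin (n + 2) →₀ ℕ} (hAB : A ≠ B) (hBA : revlexLt B A)
    {m' : Fin (n + 2) →₀ ℕ}
    (h : IsLeadMon (monomial A (1 : K) - monomial B (1 : K)) m') : m' = A := by
  rcases (mem_support_pair hAB m').1 h.1 with rfl | rfl
  · rfl
  · exact absurd (h.2 A ((mem_support_pair hAB A).2 (Or.inl rfl)) hAB) (revlex_asymm hBA)

lemma coeff_lead_pair {A B : Fin (n + 2) →₀ ℕ} (hAB : A ≠ B) :
    coeff A (monomial A (1 : K) - monomial B (1 : K)) = 1 := by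
  rw [coeff_pair hAB, if_pos rfl]

-- the three explicit pair forms
lemma gen2_eq (k k' : Fin n) :
    xP K n * zP K n * (yP K n k - yP K n k')
      = monomial (eL2 k) (1 : K) - monomial (eL2 k') (1 : K) := by
  rw [xP, zP, yP, yP, X, X, X, X, monomial_mul, mul_one, mul_sub, monomial_mul, monomial_mul,
    mul_one, eL2, eL2, exz]
  rfl

lemma gen3_eq (k : Fin n) :
    xP K n * zP K n * (yP K n k ^ 2 - xP K n * zP K n)
      = monomial (eL3 k) (1 : K) - monomial (exz + exz) (1 : K) := by
  rw [xP, zP, yP, X_pow_eq_monomial, X, X, monomial_mul, mul_one, mul_sub, monomial_mul,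
    monomial_mul, mul_one, eL3, exz]
  rfl

-- ideal membership
lemma gen_mem {i j : Fin n} (hij : i ≠ j) :
    yP K n i * yP K n j - xP K n * zP K n ∈ diamondIdeal K n := by
  rcases lt_or_gt_of_ne hij with h | h
  · exact Ideal.subset_span ⟨i, j, h, rfl⟩
  · exact Ideal.subset_span ⟨j, i, h, by ring⟩

lemma mem2 (k : Fin n) :
    xP K n * zP K n * (yP K n k - yP K n (ym n hn)) ∈ diamondIdeal K n := by
  set t : Fin n := if k.val = 0 then ⟨1, by omega⟩ else ⟨0, by omega⟩ with ht
  have htk : t ≠ k := by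
    rw [← Fin.val_ne_iff, ht]
    split <;> simp <;> omega
  have htm : t ≠ ym n hn := by
    rw [← Fin.val_ne_iff, ht]
    split <;> simp <;> omega
  have h1 := gen_mem (K := K) htk
  have h2 := gen_mem (K := K) htm
  have key : xP K n * zP K n * (yP K n k - yP K n (ym n hn))
      = yP K n (ym n hn) * (yP K n t * yP K n k - xP K n * zP K n)
        - yP K n k * (yP K n t * yP K n (ym n hn) - xP K n * zP K n) := by ring
  rw [key]
  exact Ideal.sub_mem _ (Ideal.mul_mem_left _ _ h1) (Ideal.mul_mem_left _ _ h2)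

lemma mem3 :
    xP K n * zP K n * (yP K n (ym n hn) ^ 2 - xP K n * zP K n) ∈ diamondIdeal K n := by
  have h0m : (⟨0, by omega⟩ : Fin n) ≠ ym n hn := by
    rw [← Fin.val_ne_iff]
    simp
    omega
  have h1 := gen_mem (K := K) h0m
  have h2 := mem2 (K := K) hn ⟨0, by omega⟩
  have key : xP K n * zP K n * (yP K n (ym n hn) ^ 2 - xP K n * zP K n)
      = xP K n * zP K n * (yP K n ⟨0, by omega⟩ * yP K n (ym n hn) - xP K n * zP K n)
        - yP K n (ym n hn) * (xP K n * zP K n * (yP K n ⟨0, by omega⟩ - yP K n (ym n hn))) := by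
    ring
  rw [key]
  exact Ideal.sub_mem _ (Ideal.mul_mem_left _ _ h1) (Ideal.mul_mem_left _ _ h2)


lemma not_le_at {L m : Fin (n + 2) →₀ ℕ} (t : Fin (n + 2)) (h : m t < L t) : ¬ L ≤ m :=
  fun hle => absurd (Finsupp.le_def.1 hle t) (by omega)

lemma nonstd_divisor {m : Fin (n + 2) →₀ ℕ} (h : Nonstd hn m) :
    (∃ i j : Fin n, i < j ∧ eL1 i j ≤ m) ∨ (∃ k : Fin n, (k : ℕ) < n - 1 ∧ eL2 k ≤ m) ∨
      eL3 (ym n hn) ≤ m := by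
  rcases h with ⟨i, j, hij, hi, hj⟩ | ⟨h0, hl, k, hk, hk1⟩ | ⟨h0, hl, h2⟩
  · refine Or.inl ⟨i, j, hij, Finsupp.le_def.2 fun s => ?_⟩
    rcases index_cases s with rfl | rfl | ⟨t, rfl⟩
    · rw [eL1_zero]; exact Nat.zero_le _
    · rw [eL1_last]; exact Nat.zero_le _
    · rw [eL1_iy]
      by_cases hit : i = t
      · subst hit
        rw [if_pos rfl, if_neg (Fin.ne_of_lt hij).symm]
        omega
      · rw [if_neg hit]
        by_cases hjt : j = t
        · subst hjt
          rw [if_pos rfl]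
          omega
        · rw [if_neg hjt]
          omega
  · refine Or.inr (Or.inl ⟨k, hk, Finsupp.le_def.2 fun s => ?_⟩)
    rcases index_cases s with rfl | rfl | ⟨t, rfl⟩
    · rw [eL2_zero]; exact h0
    · rw [eL2_last]; exact hl
    · rw [eL2_iy]
      by_cases hkt : k = t
      · subst hkt; rw [if_pos rfl]; exact hk1
      · rw [if_neg hkt]; exact Nat.zero_le _
  · refine Or.inr (Or.inr (Finsupp.le_def.2 fun s => ?_))
    rcases index_cases s with rfl | rfl | ⟨t, rfl⟩
    · rw [eL3_zero]; exact h0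
    · rw [eL3_last]; exact hl
    · rw [eL3_iy]
      by_cases hkt : ym n hn = t
      · subst hkt; rw [if_pos rfl]; exact h2
      · rw [if_neg hkt]; exact Nat.zero_le _

lemma pick_ne {i j : Fin n} (hij : i ≠ j) (s : Fin n) : ∃ t : Fin n, (t = i ∨ t = j) ∧ t ≠ s := by
  by_cases h : i = s
  · exact ⟨j, Or.inr rfl, fun hh => hij (by rw [h, hh])⟩
  · exact ⟨i, Or.inl rfl, h⟩

lemma exists_off {i j i' j' : Fin n} (hij : i < j) (h' : i' < j') (hne : ¬(i' = i ∧ j' = j)) :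
    ∃ t : Fin n, (t = i' ∨ t = j') ∧ t ≠ i ∧ t ≠ j := by
  by_cases c1 : i'.val ≠ i.val ∧ i'.val ≠ j.val
  · exact ⟨i', Or.inl rfl, fun h => c1.1 (congrArg Fin.val h), fun h => c1.2 (congrArg Fin.val h)⟩
  by_cases c2 : j'.val ≠ i.val ∧ j'.val ≠ j.val
  · exact ⟨j', Or.inr rfl, fun h => c2.1 (congrArg Fin.val h), fun h => c2.2 (congrArg Fin.val h)⟩
  exfalso
  have c1' : i'.val = i.val ∨ i'.val = j.val := by tauto
  have c2' : j'.val = i.val ∨ j'.val = j.val := by tauto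
  have v1 : i.val < j.val := hij
  have v2 : i'.val < j'.val := h'
  have key : i'.val = i.val ∧ j'.val = j.val := by omega
  exact hne ⟨Fin.ext key.1, Fin.ext key.2⟩

lemma eL1_ge (i' j' : Fin n) {t : Fin n} (h : t = i' ∨ t = j') :
    1 ≤ (eL1 i' j' : Fin (n + 2) →₀ ℕ) (iy t) := by
  rw [eL1_iy]
  rcases h with rfl | rfl
  · rw [if_pos rfl]
    exact Nat.le_add_right 1 _
  · rw [if_pos rfl]
    exact Nat.le_add_left 1 _

lemma part3 :
    ∀ g ∈ ({f | ∃ i j : Fin n, i < j ∧ f = yP K n i * yP K n j - xP K n * zP K n} ∪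
        {f | ∃ k : Fin n, (k : ℕ) < n - 1 ∧
          f = xP K n * zP K n * (yP K n k - yP K n (ym n hn))} ∪
        {xP K n * zP K n * ((yP K n (ym n hn)) ^ 2 - xP K n * zP K n)}),
      ∀ g' ∈ ({f | ∃ i j : Fin n, i < j ∧ f = yP K n i * yP K n j - xP K n * zP K n} ∪
        {f | ∃ k : Fin n, (k : ℕ) < n - 1 ∧
          f = xP K n * zP K n * (yP K n k - yP K n (ym n hn))} ∪
        {xP K n * zP K n * ((yP K n (ym n hn)) ^ 2 - xP K n * zP K n)}),
      g ≠ g' → ∀ m', IsLeadMon g' m' → ∀ m ∈ g.support, ¬ m' ≤ m := by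
  rintro g hg g' hg' hne m' hm' m hm
  rcases hg' with (⟨i', j', hij', rfl⟩ | ⟨k', hk', rfl⟩) | hg'
  · -- g' in family 1, m' = eL1 i' j'
    rw [gen_eq] at hm'
    have hm'eq := lead_unique_pair (ne1 i' j') (revlex1 i' j') hm'
    subst hm'eq
    rcases hg with (⟨i, j, hij, rfl⟩ | ⟨k, hk, rfl⟩) | hg
    · have hne2 : ¬(i' = i ∧ j' = j) := by
        rintro ⟨rfl, rfl⟩
        exact hne rfl
      obtain ⟨t, htor, hti, htj⟩ := exists_off hij hij' hne2
      rw [gen_eq] at hm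
      have hge := eL1_ge i' j' htor
      rcases (mem_support_pair (ne1 i j) m).1 hm with rfl | rfl
      · refine not_le_at (iy t) ?_
        rw [eL1_iy, if_neg (fun h => hti h.symm), if_neg (fun h => htj h.symm)]
        omega
      · refine not_le_at (iy t) ?_
        rw [exz_iy]
        omega
    · rw [gen2_eq] at hm
      have hkym : k ≠ ym n hn := (ne_ym_iff hn k).2 hk
      rcases (mem_support_pair (ne2 hn hkym) m).1 hm with rfl | rfl
      · obtain ⟨t, htor, hts⟩ := pick_ne (Fin.ne_of_lt hij') k
        have hge := eL1_ge i' j' htor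
        refine not_le_at (iy t) ?_
        rw [eL2_iy, if_neg (fun h => hts h.symm)]
        omega
      · obtain ⟨t, htor, hts⟩ := pick_ne (Fin.ne_of_lt hij') (ym n hn)
        have hge := eL1_ge i' j' htor
        refine not_le_at (iy t) ?_
        rw [eL2_iy, if_neg (fun h => hts h.symm)]
        omega
    · rcases hg with rfl
      rw [gen3_eq] at hm
      obtain ⟨t, htor, hts⟩ := pick_ne (Fin.ne_of_lt hij') (ym n hn)
      have hge := eL1_ge i' j' htor
      rcases (mem_support_pair (ne3 hn) m).1 hm with rfl | rfl
      · refine not_le_at (iy t) ?_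
        rw [eL3_iy, if_neg (fun h => hts h.symm)]
        omega
      · refine not_le_at (iy t) ?_
        rw [exz2_iy]
        omega
  · -- g' in family 2, m' = eL2 k'
    rw [gen2_eq] at hm'
    have hk'ym : k' ≠ ym n hn := (ne_ym_iff hn k').2 hk'
    have hm'eq := lead_unique_pair (ne2 hn hk'ym) (revlex2 hn hk'ym) hm'
    subst hm'eq
    rcases hg with (⟨i, j, hij, rfl⟩ | ⟨k, hk, rfl⟩) | hg
    · rw [gen_eq] at hm
      rcases (mem_support_pair (ne1 i j) m).1 hm with rfl | rfl
      · refine not_le_at 0 ?_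
        rw [eL1_zero, eL2_zero]
        omega
      · refine not_le_at (iy k') ?_
        rw [exz_iy, eL2_iy, if_pos rfl]
        omega
    · rw [gen2_eq] at hm
      have hkym : k ≠ ym n hn := (ne_ym_iff hn k).2 hk
      have hkk' : k ≠ k' := by
        rintro rfl
        exact hne rfl
      rcases (mem_support_pair (ne2 hn hkym) m).1 hm with rfl | rfl
      · refine not_le_at (iy k') ?_
        rw [eL2_iy, eL2_iy, if_pos rfl, if_neg hkk']
        omega
      · refine not_le_at (iy k') ?_
        rw [eL2_iy, eL2_iy, if_pos rfl, if_neg (fun h => hk'ym h.symm)]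
        omega
    · rcases hg with rfl
      rw [gen3_eq] at hm
      rcases (mem_support_pair (ne3 hn) m).1 hm with rfl | rfl
      · refine not_le_at (iy k') ?_
        rw [eL3_iy, eL2_iy, if_pos rfl, if_neg (fun h => hk'ym h.symm)]
        omega
      · refine not_le_at (iy k') ?_
        rw [exz2_iy, eL2_iy, if_pos rfl]
        omega
  · -- g' is the third element, m' = eL3 ym
    rcases hg' with rfl
    rw [gen3_eq] at hm'
    have hm'eq := lead_unique_pair (ne3 hn) (revlex3 hn) hm'
    subst hm'eq
    rcases hg with (⟨i, j, hij, rfl⟩ | ⟨k, hk, rfl⟩) | hg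
    · rw [gen_eq] at hm
      rcases (mem_support_pair (ne1 i j) m).1 hm with rfl | rfl
      · refine not_le_at 0 ?_
        rw [eL1_zero, eL3_zero]
        omega
      · refine not_le_at (iy (ym n hn)) ?_
        rw [exz_iy, eL3_iy, if_pos rfl]
        omega
    · rw [gen2_eq] at hm
      have hkym : k ≠ ym n hn := (ne_ym_iff hn k).2 hk
      rcases (mem_support_pair (ne2 hn hkym) m).1 hm with rfl | rfl
      · refine not_le_at (iy (ym n hn)) ?_
        rw [eL2_iy, eL3_iy, if_pos rfl, if_neg hkym]
        omega
      · refine not_le_at (iy (ym n hn)) ?_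
        rw [eL2_iy, eL3_iy, if_pos rfl, if_pos rfl]
        omega
    · rcases hg with rfl
      exact absurd rfl hne

end DGB

open DGB in
theorem reduced_groebner_basis_of_diamond (K : Type*) [Field K] (n : ℕ) (hn : 3 ≤ n) :
    IsReducedGroebnerBasis
      ({f | ∃ i j : Fin n, i < j ∧ f = yP K n i * yP K n j - xP K n * zP K n} ∪
        {f | ∃ k : Fin n, (k : ℕ) < n - 1 ∧
          f = xP K n * zP K n * (yP K n k - yP K n ⟨n - 1, by omega⟩)} ∪
        {xP K n * zP K n * ((yP K n ⟨n - 1, by omega⟩) ^ 2 - xP K n * zP K n)})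
      (diamondIdeal K n) := by
  have hGI : ({f | ∃ i j : Fin n, i < j ∧ f = yP K n i * yP K n j - xP K n * zP K n} ∪
        {f | ∃ k : Fin n, (k : ℕ) < n - 1 ∧
          f = xP K n * zP K n * (yP K n k - yP K n ⟨n - 1, by omega⟩)} ∪
        {xP K n * zP K n * ((yP K n ⟨n - 1, by omega⟩) ^ 2 - xP K n * zP K n)})
      ⊆ (diamondIdeal K n : Set (MvPolynomial (Fin (n + 2)) K)) := by
    rintro g ((⟨i, j, hij, rfl⟩ | ⟨k, hk, rfl⟩) | hg)
    · exact Ideal.subset_span ⟨i, j, hij, rfl⟩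
    · exact mem2 hn k
    · rcases hg with rfl
      exact mem3 hn
  refine ⟨⟨hGI, ?_⟩, ?_, ?_⟩
  · -- initial ideal equality
    apply le_antisymm
    · rw [initialIdeal]
      apply Ideal.span_le.2
      rintro p ⟨f, hf, m, hm, rfl⟩
      have hns := lead_nonstd hn hf hm
      rcases nonstd_divisor hn hns with ⟨i, j, hij, hle⟩ | ⟨k, hk, hle⟩ | hle
      · have hglead : IsLeadMon (yP K n i * yP K n j - xP K n * zP K n) (eL1 i j) := by
          rw [gen_eq]
          exact isLead_pair (ne1 i j) (revlex1 i j)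
        have hmem : monomial (eL1 i j) (1 : K) ∈
            {p | ∃ g ∈ ({f | ∃ i j : Fin n, i < j ∧ f = yP K n i * yP K n j - xP K n * zP K n} ∪
              {f | ∃ k : Fin n, (k : ℕ) < n - 1 ∧
                f = xP K n * zP K n * (yP K n k - yP K n ⟨n - 1, by omega⟩)} ∪
              {xP K n * zP K n * ((yP K n ⟨n - 1, by omega⟩) ^ 2 - xP K n * zP K n)}),
              ∃ m, IsLeadMon g m ∧ p = monomial m (1 : K)} :=
          ⟨_, Or.inl (Or.inl ⟨i, j, hij, rfl⟩), eL1 i j, hglead, rfl⟩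
        have heq : (monomial m (1 : K)) = monomial (m - eL1 i j) 1 * monomial (eL1 i j) 1 := by
          rw [monomial_mul, one_mul, tsub_add_cancel_of_le hle]
        rw [heq]
        exact Ideal.mul_mem_left _ _ (Ideal.subset_span hmem)
      · have hkym : k ≠ ym n hn := (ne_ym_iff hn k).2 hk
        have hglead : IsLeadMon (xP K n * zP K n * (yP K n k - yP K n (ym n hn))) (eL2 k) := by
          rw [gen2_eq]
          exact isLead_pair (ne2 hn hkym) (revlex2 hn hkym)
        have hmem : monomial (eL2 k) (1 : K) ∈
            {p | ∃ g ∈ ({f | ∃ i j : Fin n, i < j ∧ f = yP K n i * yP K n j - xP K n * zP K n} ∪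
              {f | ∃ k : Fin n, (k : ℕ) < n - 1 ∧
                f = xP K n * zP K n * (yP K n k - yP K n ⟨n - 1, by omega⟩)} ∪
              {xP K n * zP K n * ((yP K n ⟨n - 1, by omega⟩) ^ 2 - xP K n * zP K n)}),
              ∃ m, IsLeadMon g m ∧ p = monomial m (1 : K)} :=
          ⟨_, Or.inl (Or.inr ⟨k, hk, rfl⟩), eL2 k, hglead, rfl⟩
        have heq : (monomial m (1 : K)) = monomial (m - eL2 k) 1 * monomial (eL2 k) 1 := by
          rw [monomial_mul, one_mul, tsub_add_cancel_of_le hle]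
        rw [heq]
        exact Ideal.mul_mem_left _ _ (Ideal.subset_span hmem)
      · have hglead : IsLeadMon
            (xP K n * zP K n * ((yP K n (ym n hn)) ^ 2 - xP K n * zP K n)) (eL3 (ym n hn)) := by
          rw [gen3_eq]
          exact isLead_pair (ne3 hn) (revlex3 hn)
        have hmem : monomial (eL3 (ym n hn)) (1 : K) ∈
            {p | ∃ g ∈ ({f | ∃ i j : Fin n, i < j ∧ f = yP K n i * yP K n j - xP K n * zP K n} ∪
              {f | ∃ k : Fin n, (k : ℕ) < n - 1 ∧
                f = xP K n * zP K n * (yP K n k - yP K n ⟨n - 1, by omega⟩)} ∪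
              {xP K n * zP K n * ((yP K n ⟨n - 1, by omega⟩) ^ 2 - xP K n * zP K n)}),
              ∃ m, IsLeadMon g m ∧ p = monomial m (1 : K)} :=
          ⟨_, Or.inr rfl, eL3 (ym n hn), hglead, rfl⟩
        have heq : (monomial m (1 : K))
            = monomial (m - eL3 (ym n hn)) 1 * monomial (eL3 (ym n hn)) 1 := by
          rw [monomial_mul, one_mul, tsub_add_cancel_of_le hle]
        rw [heq]
        exact Ideal.mul_mem_left _ _ (Ideal.subset_span hmem)
    · apply Ideal.span_le.2
      rintro p ⟨g, hgG, m, hm, rfl⟩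
      rw [initialIdeal]
      exact Ideal.subset_span ⟨g, hGI hgG, m, hm, rfl⟩
  · -- leading coefficients are 1
    rintro g ((⟨i, j, hij, rfl⟩ | ⟨k, hk, rfl⟩) | hg)
    · refine ⟨eL1 i j, ?_, ?_⟩
      · rw [gen_eq]
        exact isLead_pair (ne1 i j) (revlex1 i j)
      · rw [gen_eq]
        exact coeff_lead_pair (ne1 i j)
    · have hkym : k ≠ ym n hn := (ne_ym_iff hn k).2 hk
      refine ⟨eL2 k, ?_, ?_⟩
      · rw [gen2_eq]
        exact isLead_pair (ne2 hn hkym) (revlex2 hn hkym)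
      · rw [gen2_eq]
        exact coeff_lead_pair (ne2 hn hkym)
    · rcases hg with rfl
      refine ⟨eL3 (ym n hn), ?_, ?_⟩
      · rw [gen3_eq]
        exact isLead_pair (ne3 hn) (revlex3 hn)
      · rw [gen3_eq]
        exact coeff_lead_pair (ne3 hn)
  · exact part3 hn
end

section
/- For n ≥ 3, the monomial ideal in_<(I) = (y_i y_j : 1 ≤ i < j ≤ n) + (x y_k z : 1 ≤ k ≤ n−1) + (x y_n² z) in S = K[x, y_1, …, y_n, z] has linear quotients with respect to the ordering y_1y_2, y_1y_3, …, y_1y_n, y_2y_3, …, y_2y_n, …, y_{n−1}y_n, xy_1z, xy_2z, …, xy_{n−1}z, xy_n²z of its minimal monomial generators; that is, for each k ≥ 2, the colon ideal (f_1, …, f_{k−1}) : f_k is generated by variables. -/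
open MvPolynomial

/-- The minimal monomial generators of `in_<(I)` in the order
`y_1y_2, y_1y_3, …, y_1y_n, y_2y_3, …, y_2y_n, …, y_{n-1}y_n, xy_1z, …, xy_{n-1}z, xy_n²z`. -/
noncomputable def genList (K : Type*) [Field K] (n : ℕ) (hn : 1 ≤ n) :
    List (MvPolynomial (Fin (n + 2)) K) :=
  ((List.finRange n).flatMap fun i =>
      (((List.finRange n).filter fun j => decide (i < j)).map fun j => yP K n i * yP K n j)) ++
    (((List.finRange n).filter fun k : Fin n => decide (k.1 < n - 1)).map
      fun k => xP K n * yP K n k * zP K n) ++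
    [xP K n * (yP K n ⟨n - 1, by omega⟩) ^ 2 * zP K n]

/-! ### Auxiliary machinery -/

/-- The general fact: the colon ideal of a monomial ideal by a single monomial is the span of
the variables `T` whenever `T` satisfies the two divisibility conditions below. -/
lemma colon_span_monomial {σ : Type*} {K : Type*} [Field K]
    (A : Set (σ →₀ ℕ)) (a : σ →₀ ℕ) (T : Set σ)
    (h1 : ∀ t ∈ T, ∃ s ∈ A, s ≤ Finsupp.single t 1 + a)
    (h2 : ∀ m : σ →₀ ℕ, (∃ s ∈ A, s ≤ m + a) → ∃ t ∈ T, m t ≠ 0) :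
    Submodule.colon (Ideal.span ((fun s => monomial s (1 : K)) '' A))
        (Ideal.span {monomial a (1 : K)})
      = Ideal.span (X '' T) := by
  classical
  apply le_antisymm
  · intro r hr
    rw [← Ideal.submodule_span_eq (s := {monomial a (1:K)})] at hr
    rw [Submodule.mem_colon_span_singleton, smul_eq_mul, mem_ideal_span_monomial_image] at hr
    rw [mem_ideal_span_X_image]
    intro m hm
    have hcm : (r * monomial a 1).coeff (m + a) = r.coeff m := by
      simpa using coeff_mul_monomial m a (1:K) r
    have hmem : (m + a) ∈ (r * monomial a (1:K)).support := by
      rw [mem_support_iff, hcm]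
      exact mem_support_iff.mp hm
    obtain ⟨s, hs, hle⟩ := hr _ hmem
    exact h2 m ⟨s, hs, hle⟩
  · rw [Ideal.span_le]
    rintro _ ⟨t, ht, rfl⟩
    rw [SetLike.mem_coe, ← Ideal.submodule_span_eq (s := {monomial a (1:K)}),
      Submodule.mem_colon_span_singleton, smul_eq_mul]
    have : (X t : MvPolynomial σ K) * monomial a 1 = monomial (Finsupp.single t 1 + a) 1 := by
      rw [X, monomial_mul, one_mul]
    rw [this, mem_ideal_span_monomial_image]
    intro xi hxi
    rw [support_monomial, if_neg (one_ne_zero)] at hxi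
    simp only [Finset.mem_singleton] at hxi
    subst hxi
    exact h1 t ht

/-- embedding of the `y`-indices into the variable index set -/
def emb (n : ℕ) (i : Fin n) : Fin (n + 2) := ⟨i.1 + 1, by omega⟩

lemma emb_inj {n : ℕ} {i j : Fin n} : emb n i = emb n j ↔ i = j := by
  constructor
  · intro h; apply Fin.ext; have := congrArg Fin.val h; simp [emb] at this; omega
  · rintro rfl; rfl

lemma emb_ne_zero {n : ℕ} (i : Fin n) : emb n i ≠ (0 : Fin (n + 2)) := by
  intro h; have := congrArg Fin.val h; simp [emb] at this

lemma emb_ne_last {n : ℕ} (i : Fin n) : emb n i ≠ Fin.last (n + 1) := by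
  intro h; have := congrArg Fin.val h; simp [emb, Fin.last] at this; omega

@[simp] lemma single_emb_apply {n : ℕ} (i j : Fin n) (c : ℕ) :
    (Finsupp.single (emb n i) c) (emb n j) = if i = j then c else 0 := by
  rw [Finsupp.single_apply]
  simp [emb_inj]

@[simp] lemma single_zero_emb {n : ℕ} (j : Fin n) (c : ℕ) :
    (Finsupp.single (0 : Fin (n + 2)) c) (emb n j) = 0 := by
  rw [Finsupp.single_apply, if_neg]
  exact fun h => emb_ne_zero j h.symm

@[simp] lemma single_last_emb {n : ℕ} (j : Fin n) (c : ℕ) :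
    (Finsupp.single (Fin.last (n + 1)) c) (emb n j) = 0 := by
  rw [Finsupp.single_apply, if_neg]
  exact fun h => emb_ne_last j h.symm

/-- Tags for the three families of generators. -/
abbrev Tagg (n : ℕ) := (Fin n × Fin n) ⊕ (Fin n ⊕ Unit)

/-- The exponent vector of the generator with a given tag. -/
noncomputable def tagExp (n : ℕ) : Tagg n → (Fin (n + 2) →₀ ℕ)
  | .inl (i, j) => Finsupp.single (emb n i) 1 + Finsupp.single (emb n j) 1
  | .inr (.inl k) => Finsupp.single 0 1 + Finsupp.single (emb n k) 1
      + Finsupp.single (Fin.last (n + 1)) 1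
  | .inr (.inr _) => Finsupp.single 0 1 + Finsupp.single (⟨n, by omega⟩ : Fin (n + 2)) 2
      + Finsupp.single (Fin.last (n + 1)) 1

/-- Position key of a tag, compatible with the chosen order of the generators. -/
def tagKey (n : ℕ) : Tagg n → ℕ
  | .inl (i, j) => i.1 * n + j.1
  | .inr (.inl k) => n * n + k.1
  | .inr (.inr _) => n * n + n

/-- The list of tags, in the same order as `genList`. -/
def tagList (n : ℕ) : List (Tagg n) :=
  ((List.finRange n).flatMap fun i =>
      (((List.finRange n).filter fun j => decide (i < j)).map fun j => Sum.inl (i, j))) ++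
    (((List.finRange n).filter fun k : Fin n => decide (k.1 < n - 1)).map
      fun k => Sum.inr (Sum.inl k)) ++
    [Sum.inr (Sum.inr ())]

lemma mem_tagList_inl {n : ℕ} {i j : Fin n} : Sum.inl (i, j) ∈ tagList n ↔ i < j := by
  simp [tagList, List.mem_flatMap, List.mem_filter, List.mem_finRange]

lemma mem_tagList_inrl {n : ℕ} {k : Fin n} :
    Sum.inr (Sum.inl k) ∈ tagList n ↔ k.1 < n - 1 := by
  simp [tagList, List.mem_flatMap, List.mem_filter, List.mem_finRange]

lemma keyA_lt_sq {n i j : ℕ} (hi : i < n) (hj : j < n) : i * n + j < n * n := by nlinarith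

lemma keyA_mono {n i1 j1 i2 j2 : ℕ} (h : i1 < i2) (hj : j1 < n) :
    i1 * n + j1 < i2 * n + j2 := by nlinarith

lemma keyA_cases {n i1 j1 i2 j2 : ℕ} (hj1 : j1 < n) (hj2 : j2 < n)
    (h : i1 * n + j1 < i2 * n + j2) : i1 < i2 ∨ (i1 = i2 ∧ j1 < j2) := by
  rcases Nat.lt_trichotomy i1 i2 with h' | h' | h'
  · exact Or.inl h'
  · subst h'; right; exact ⟨rfl, by omega⟩
  · exfalso; nlinarith

lemma tagList_sorted (n : ℕ) :
    (tagList n).Pairwise (fun a b => tagKey n a < tagKey n b) := by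
  unfold tagList
  rw [List.pairwise_append]
  refine ⟨?_, ?_, ?_⟩
  · rw [List.pairwise_append]
    refine ⟨?_, ?_, ?_⟩
    · rw [List.pairwise_flatMap]
      constructor
      · intro i _
        rw [List.pairwise_map]
        refine List.Pairwise.imp ?_ (((List.pairwise_lt_finRange n).filter _))
        intro j1 j2 h
        simp only [tagKey]
        omega
      · refine List.Pairwise.imp ?_ (List.pairwise_lt_finRange n)
        intro i1 i2 h x hx y hy
        simp only [List.mem_map, List.mem_filter] at hx hy
        obtain ⟨j1, hj1, rfl⟩ := hx
        obtain ⟨j2, hj2, rfl⟩ := hy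
        exact keyA_mono h j1.2
    · rw [List.pairwise_map]
      refine List.Pairwise.imp ?_ (((List.pairwise_lt_finRange n).filter _))
      intro k1 k2 h
      simp only [tagKey]
      omega
    · intro x hx y hy
      simp only [List.mem_flatMap, List.mem_map, List.mem_filter] at hx hy
      obtain ⟨i, -, j, -, rfl⟩ := hx
      obtain ⟨k, -, rfl⟩ := hy
      simp only [tagKey]
      have := keyA_lt_sq i.2 j.2
      omega
  · simp
  · intro x hx y hy
    simp only [List.mem_singleton] at hy
    subst hy
    simp only [List.mem_append, List.mem_flatMap, List.mem_map, List.mem_filter] at hx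
    rcases hx with ⟨i, -, j, -, rfl⟩ | ⟨k, -, rfl⟩
    · simp only [tagKey]
      have := keyA_lt_sq i.2 j.2
      omega
    · simp only [tagKey]
      have := k.2
      omega

lemma mem_take_iff {α : Type*} (key : α → ℕ) {l : List α}
    (hs : l.Pairwise (fun a b => key a < key b)) {k : ℕ} (hk : k < l.length) {x : α}
    (hx : x ∈ l) : x ∈ l.take k ↔ key x < key (l[k]'hk) := by
  constructor
  · intro hmem
    have h2 := List.pairwise_append.mp ((List.take_append_drop k l).symm ▸ hs)
    have hd : l[k]'hk ∈ l.drop k := by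
      rw [List.drop_eq_getElem_cons hk]
      exact List.mem_cons_self
    exact h2.2.2 x hmem _ hd
  · intro hkey
    by_contra hmem
    have hx' : x ∈ l.drop k := by
      rw [← List.take_append_drop k l] at hx
      rcases List.mem_append.mp hx with h | h
      · exact absurd h hmem
      · exact h
    rw [List.drop_eq_getElem_cons hk] at hx'
    rcases List.mem_cons.mp hx' with rfl | h
    · omega
    · have hp := hs.sublist (List.drop_sublist k l)
      rw [List.drop_eq_getElem_cons hk] at hp
      have := (List.pairwise_cons.mp hp).1 x h
      omega

lemma succ_castSucc_eq_emb {n : ℕ} (i : Fin n) : i.succ.castSucc = emb n i := by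
  apply Fin.ext; simp [emb]

lemma yP_eq (K : Type*) [Field K] (n : ℕ) (i : Fin n) : yP K n i = X (emb n i) := by
  rw [yP, succ_castSucc_eq_emb]

lemma genList_eq (K : Type*) [Field K] (n : ℕ) (hn : 1 ≤ n) :
    genList K n hn = (tagList n).map (fun u => monomial (tagExp n u) (1 : K)) := by
  unfold genList tagList
  simp only [List.map_append, List.map_flatMap, List.map_map]
  congr 1
  congr 1
  · apply List.flatMap_congr
    intro i _
    apply List.map_congr_left
    intro j _
    simp only [Function.comp_apply, yP_eq, X, monomial_mul, one_mul, tagExp]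
  · apply List.map_congr_left
    intro k _
    simp only [Function.comp_apply, tagExp, yP_eq, xP, zP, X, monomial_mul, one_mul]
  · simp only [List.map_cons, List.map_nil]
    congr 1
    have h1 : emb n ⟨n - 1, by omega⟩ = (⟨n, by omega⟩ : Fin (n + 2)) := by
      apply Fin.ext; simp [emb]; omega
    rw [xP, zP, yP_eq, h1, X_pow_eq_monomial, X, X, monomial_mul, monomial_mul, one_mul, one_mul]
    rfl

/-- The key reduction: to compute the colon ideal at position `k` it suffices to check the two
divisibility conditions at the level of tags. -/
lemma key_colon (K : Type*) [Field K] {n k : ℕ} (hn1 : 1 ≤ n)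
    (hlen : k < (tagList n).length) (T : Set (Fin (n + 2)))
    (h1 : ∀ c ∈ T, ∃ u ∈ tagList n, tagKey n u < tagKey n ((tagList n)[k]'hlen) ∧
        tagExp n u ≤ Finsupp.single c 1 + tagExp n ((tagList n)[k]'hlen))
    (h2 : ∀ (m : Fin (n + 2) →₀ ℕ) (u : Tagg n), u ∈ tagList n →
        tagKey n u < tagKey n ((tagList n)[k]'hlen) →
        tagExp n u ≤ m + tagExp n ((tagList n)[k]'hlen) → ∃ c ∈ T, m c ≠ 0)
    {hk : k < (genList K n hn1).length} :
    Submodule.colon (Ideal.span {f | f ∈ (genList K n hn1).take k})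
        (Ideal.span {(genList K n hn1)[k]'hk}) = Ideal.span (X '' T) := by
  have hA : {f | f ∈ (genList K n hn1).take k} =
      (fun s => monomial s (1:K)) '' (tagExp n '' {u | u ∈ (tagList n).take k}) := by
    rw [genList_eq, ← List.map_take]
    ext f
    simp only [Set.mem_setOf_eq, List.mem_map, Set.mem_image]
    constructor
    · rintro ⟨u, hu, rfl⟩; exact ⟨_, ⟨u, hu, rfl⟩, rfl⟩
    · rintro ⟨s, ⟨u, hu, rfl⟩, rfl⟩; exact ⟨u, hu, rfl⟩
  have hB : (genList K n hn1)[k]'hk = monomial (tagExp n ((tagList n)[k]'hlen)) (1:K) := by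
    simp only [genList_eq, List.getElem_map]
  rw [hA, hB]
  apply colon_span_monomial
  · intro c hc
    obtain ⟨u, hu, hkey, hle⟩ := h1 c hc
    exact ⟨tagExp n u,
      ⟨u, (mem_take_iff (tagKey n) (tagList_sorted n) hlen hu).mpr hkey, rfl⟩, hle⟩
  · rintro m ⟨s, ⟨u, hu, rfl⟩, hle⟩
    have humem : u ∈ tagList n := List.take_subset k _ hu
    exact h2 m u humem ((mem_take_iff (tagKey n) (tagList_sorted n) hlen humem).mp hu) hle

/-- `in_<(I)` has linear quotients w.r.t. the above ordering of its minimal monomial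
generators: each colon ideal `(f_1, …, f_k-1) : f_k` is generated by a set of variables. -/
theorem diamond_ini_linear_quotients (K : Type*) [Field K] (n : ℕ) (hn : 3 ≤ n) :
    ∀ (k : ℕ) (hk : k < (genList K n (by omega)).length), 1 ≤ k →
      ∃ T : Set (Fin (n + 2)),
        Submodule.colon
            (Ideal.span {f | f ∈ (genList K n (by omega)).take k})
            (Ideal.span {(genList K n (by omega))[k]'hk}) =
          Ideal.span (X '' T) := by
  intro k hk _
  have hn1 : 1 ≤ n := by omega
  have hlen : k < (tagList n).length := by
    have h := hk
    rw [genList_eq] at h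
    simpa using h
  have htmem : (tagList n)[k]'hlen ∈ tagList n := List.getElem_mem _
  rcases htag : (tagList n)[k]'hlen with ⟨i, j⟩ | k0 | u0
  · -- case f_k = y_i y_j
    have hij : i < j := mem_tagList_inl.mp (htag ▸ htmem)
    have hij' : i.1 < j.1 := hij
    refine ⟨emb n '' {a : Fin n | a.1 < j.1 ∧ a ≠ i}, key_colon K hn1 hlen _ ?_ ?_⟩
    · rintro c ⟨a, ⟨haj, hai⟩, rfl⟩
      rw [htag]
      rcases lt_or_gt_of_ne hai with hlt | hgt
      · refine ⟨Sum.inl (a, i), mem_tagList_inl.mpr hlt, ?_, ?_⟩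
        · simp only [tagKey]
          exact keyA_mono hlt i.2
        · have he : Finsupp.single (emb n a) 1 + tagExp n (Sum.inl (i, j)) =
              tagExp n (Sum.inl (a, i)) + Finsupp.single (emb n j) 1 := by
            simp only [tagExp]; abel
          rw [he]; exact le_self_add
      · refine ⟨Sum.inl (i, a), mem_tagList_inl.mpr hgt, ?_, ?_⟩
        · simp only [tagKey]; omega
        · have he : Finsupp.single (emb n a) 1 + tagExp n (Sum.inl (i, j)) =
              tagExp n (Sum.inl (i, a)) + Finsupp.single (emb n j) 1 := by
            simp only [tagExp]; abel
          rw [he]; exact le_self_add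
    · intro m u humem hkey hle
      rw [htag] at hkey hle
      rcases u with ⟨i0, j0⟩ | l | u0
      · have hij0 : i0 < j0 := mem_tagList_inl.mp humem
        have hij0' : i0.1 < j0.1 := hij0
        simp only [tagKey] at hkey
        rcases keyA_cases j0.2 j.2 hkey with hlt | ⟨heq, hlt⟩
        · have hne1 : i ≠ i0 := Fin.ne_of_val_ne (by omega)
          have hne2 : j ≠ i0 := Fin.ne_of_val_ne (by omega)
          have hne3 : j0 ≠ i0 := Fin.ne_of_val_ne (by omega)
          have hc := Finsupp.le_def.mp hle (emb n i0)
          simp only [tagExp, Finsupp.add_apply, single_emb_apply, hne1, hne2, hne3,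
            if_true, if_false] at hc
          refine ⟨emb n i0, ⟨i0, ⟨by omega, Fin.ne_of_val_ne (by omega)⟩, rfl⟩, by omega⟩
        · have hne1 : i ≠ j0 := Fin.ne_of_val_ne (by omega)
          have hne2 : j ≠ j0 := Fin.ne_of_val_ne (by omega)
          have hne3 : i0 ≠ j0 := Fin.ne_of_val_ne (by omega)
          have hc := Finsupp.le_def.mp hle (emb n j0)
          simp only [tagExp, Finsupp.add_apply, single_emb_apply, hne1, hne2, hne3,
            if_true, if_false] at hc
          refine ⟨emb n j0, ⟨j0, ⟨by omega, Fin.ne_of_val_ne (by omega)⟩, rfl⟩, by omega⟩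
      · simp only [tagKey] at hkey
        exfalso
        have := keyA_lt_sq i.2 j.2
        omega
      · simp only [tagKey] at hkey
        exfalso
        have := keyA_lt_sq i.2 j.2
        omega
  · -- case f_k = x y_{k0} z
    have hk0 : k0.1 < n - 1 := mem_tagList_inrl.mp (htag ▸ htmem)
    refine ⟨emb n '' {a : Fin n | a ≠ k0}, key_colon K hn1 hlen _ ?_ ?_⟩
    · rintro c ⟨a, hak, rfl⟩
      rw [htag]
      rcases lt_or_gt_of_ne hak with hlt | hgt
      · refine ⟨Sum.inl (a, k0), mem_tagList_inl.mpr hlt, ?_, ?_⟩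
        · simp only [tagKey]
          have := keyA_lt_sq a.2 k0.2
          omega
        · have he : Finsupp.single (emb n a) 1 + tagExp n (Sum.inr (Sum.inl k0)) =
              tagExp n (Sum.inl (a, k0)) +
                (Finsupp.single 0 1 + Finsupp.single (Fin.last (n + 1)) 1) := by
            simp only [tagExp]; abel
          rw [he]; exact le_self_add
      · refine ⟨Sum.inl (k0, a), mem_tagList_inl.mpr hgt, ?_, ?_⟩
        · simp only [tagKey]
          have := keyA_lt_sq k0.2 a.2
          omega
        · have he : Finsupp.single (emb n a) 1 + tagExp n (Sum.inr (Sum.inl k0)) =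
              tagExp n (Sum.inl (k0, a)) +
                (Finsupp.single 0 1 + Finsupp.single (Fin.last (n + 1)) 1) := by
            simp only [tagExp]; abel
          rw [he]; exact le_self_add
    · intro m u humem hkey hle
      rw [htag] at hkey hle
      rcases u with ⟨i0, j0⟩ | l | u0
      · have hij0 : i0 < j0 := mem_tagList_inl.mp humem
        have hij0' : i0.1 < j0.1 := hij0
        by_cases hi0 : i0 = k0
        · have hne1 : k0 ≠ j0 := Fin.ne_of_val_ne (by omega)
          have hne2 : i0 ≠ j0 := Fin.ne_of_val_ne (by omega)
          have hc := Finsupp.le_def.mp hle (emb n j0)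
          simp only [tagExp, Finsupp.add_apply, single_emb_apply, single_zero_emb,
            single_last_emb, hne1, hne2, if_true, if_false] at hc
          refine ⟨emb n j0, ⟨j0, Fin.ne_of_val_ne (by omega), rfl⟩, by omega⟩
        · have hne1 : k0 ≠ i0 := Ne.symm hi0
          have hne2 : j0 ≠ i0 := Fin.ne_of_val_ne (by omega)
          have hc := Finsupp.le_def.mp hle (emb n i0)
          simp only [tagExp, Finsupp.add_apply, single_emb_apply, single_zero_emb,
            single_last_emb, hne1, hne2, if_true, if_false] at hc
          refine ⟨emb n i0, ⟨i0, hi0, rfl⟩, by omega⟩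
      · have hl : l.1 < n - 1 := mem_tagList_inrl.mp humem
        simp only [tagKey] at hkey
        have hne1 : k0 ≠ l := Fin.ne_of_val_ne (by omega)
        have hc := Finsupp.le_def.mp hle (emb n l)
        simp only [tagExp, Finsupp.add_apply, single_emb_apply, single_zero_emb,
          single_last_emb, hne1, if_true, if_false] at hc
        refine ⟨emb n l, ⟨l, Fin.ne_of_val_ne (by omega), rfl⟩, by omega⟩
      · simp only [tagKey] at hkey
        exfalso
        have := k0.2
        omega
  · -- case f_k = x y_n² z
    have hym : n - 1 < n := by omega
    have hrw : (⟨n, by omega⟩ : Fin (n + 2)) = emb n ⟨n - 1, hym⟩ := by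
      apply Fin.ext; simp [emb]; omega
    refine ⟨emb n '' {a : Fin n | a.1 < n - 1}, key_colon K hn1 hlen _ ?_ ?_⟩
    · rintro c ⟨a, ha, rfl⟩
      rw [htag]
      refine ⟨Sum.inr (Sum.inl a), mem_tagList_inrl.mpr ha, ?_, ?_⟩
      · simp only [tagKey]
        have := a.2
        omega
      · have he : Finsupp.single (emb n a) 1 + tagExp n (Sum.inr (Sum.inr u0)) =
            tagExp n (Sum.inr (Sum.inl a)) +
              Finsupp.single (⟨n, by omega⟩ : Fin (n + 2)) 2 := by
          simp only [tagExp]; abel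
        rw [he]; exact le_self_add
    · intro m u humem hkey hle
      rw [htag] at hkey hle
      rcases u with ⟨i0, j0⟩ | l | u1
      · have hij0 : i0 < j0 := mem_tagList_inl.mp humem
        have hij0' : i0.1 < j0.1 := hij0
        have hi0 : i0.1 < n - 1 := by have := j0.2; omega
        have hne1 : (⟨n - 1, hym⟩ : Fin n) ≠ i0 := Fin.ne_of_val_ne (by simp; omega)
        have hne2 : j0 ≠ i0 := Fin.ne_of_val_ne (by omega)
        have hc := Finsupp.le_def.mp hle (emb n i0)
        simp only [tagExp, hrw, Finsupp.add_apply, single_emb_apply, single_zero_emb,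
          single_last_emb, hne1, hne2, if_true, if_false] at hc
        refine ⟨emb n i0, ⟨i0, hi0, rfl⟩, by omega⟩
      · have hl : l.1 < n - 1 := mem_tagList_inrl.mp humem
        have hne1 : (⟨n - 1, hym⟩ : Fin n) ≠ l := Fin.ne_of_val_ne (by simp; omega)
        have hc := Finsupp.le_def.mp hle (emb n l)
        simp only [tagExp, hrw, Finsupp.add_apply, single_emb_apply, single_zero_emb,
          single_last_emb, hne1, if_true, if_false] at hc
        refine ⟨emb n l, ⟨l, hl, rfl⟩, by omega⟩
      · simp only [tagKey] at hkey
        omega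
end
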